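/- Let V be a finite-dimensional real vector space with inner product g, C: V → V* a skew-symmetric linear map (a 2-form), and P: V → V the g-orthogonal projector with ker P = ker C. Then there exists a unique skew-symmetric linear map Π: V* → V (a 2-vector) such that ΠC = P and PΠ = Π. -/

import Mathlib

open RealInnerProductSpace

theorem skew_pinv_aux {V : Type*} [NormedAddCommGroup V] [InnerProductSpace ℝ V]
    [FiniteDimensional ℝ V]
    (A : V →ₗ[ℝ] V) (hA : ∀ v w : V, ⟪A v, w⟫ = -⟪v, A w⟫)
    (P : V →ₗ[ℝ] V) (hPidem : P ∘ₗ P = P)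
    (hPsa : ∀ v w : V, ⟪P v, w⟫ = ⟪v, P w⟫)
    (hker : LinearMap.ker P = LinearMap.ker A) :
    ∃ B : V →ₗ[ℝ] V, (∀ v w : V, ⟪v, B w⟫ = -⟪w, B v⟫) ∧
      (∀ v, B (A v) = P v) ∧ (∀ v, P (B v) = B v) ∧ (∀ v, A (B v) = P v) := by
  set K := LinearMap.ker A with hK
  set W := Kᗮ with hW
  have hKW : ∀ x : V, x ∈ K → x ∈ W → x = 0 := by
    intro x hxK hxW
    have := (Submodule.mem_orthogonal K x).mp hxW x hxK
    exact inner_self_eq_zero.mp this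
  have hPker : ∀ u : V, u ∈ K → P u = 0 := by
    intro u hu
    exact (hker ▸ hu : u ∈ LinearMap.ker P)
  have hPidem' : ∀ v, P (P v) = P v := by
    intro v
    exact congrArg (fun f : V →ₗ[ℝ] V => f v) hPidem
  have hsubK : ∀ v, v - P v ∈ K := by
    intro v
    have : P (v - P v) = 0 := by simp [map_sub, hPidem' v]
    exact hker ▸ (this : v - P v ∈ LinearMap.ker P)
  have hPmemW : ∀ v, P v ∈ W := by
    intro v
    rw [Submodule.mem_orthogonal]
    intro u hu
    rw [← hPsa, hPker u hu, inner_zero_left]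
  have hAmemW : ∀ v, A v ∈ W := by
    intro v
    rw [Submodule.mem_orthogonal]
    intro u hu
    have hu0 : A u = 0 := hu
    have h := hA u v
    rw [hu0, inner_zero_left] at h
    have h2 : (inner ℝ u (A v) : ℝ) = 0 := by linarith
    exact h2
  have hPW : ∀ w : V, w ∈ W → P w = w := by
    intro w hw
    have h2 : w - P w ∈ W := sub_mem hw (hPmemW w)
    exact (sub_eq_zero.mp (hKW _ (hsubK w) h2)).symm
  set A' : W →ₗ[ℝ] W := (A ∘ₗ W.subtype).codRestrict W (fun w => hAmemW w) with hA'
  have hA'coe : ∀ x : W, (A' x : V) = A x := fun x => rfl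
  have hinj : Function.Injective A' := by
    rw [← LinearMap.ker_eq_bot, LinearMap.ker_eq_bot']
    intro x hx
    have h1 : A (x : V) = 0 := by
      have := congrArg (Subtype.val) hx
      simpa [hA'coe] using this
    exact Subtype.ext (hKW _ h1 x.2)
  have hsurj : Function.Surjective A' := LinearMap.injective_iff_surjective.mp hinj
  set e : W ≃ₗ[ℝ] W := LinearEquiv.ofBijective A' ⟨hinj, hsurj⟩ with he
  have hecoe : ∀ x : W, e x = A' x := fun x => rfl
  set P' : V →ₗ[ℝ] W := P.codRestrict W hPmemW with hP'
  set B : V →ₗ[ℝ] V := W.subtype ∘ₗ e.symm.toLinearMap ∘ₗ P' with hB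
  have hBdef : ∀ v : V, B v = (e.symm (P' v) : V) := fun v => rfl
  have hBW : ∀ v, B v ∈ W := fun v => (e.symm (P' v)).2
  have hAB : ∀ v, A (B v) = P v := by
    intro v
    have h : A (B v) = (A' (e.symm (P' v)) : V) := rfl
    rw [h, ← hecoe, e.apply_symm_apply]
    rfl
  have hPB : ∀ v, P (B v) = B v := fun v => hPW _ (hBW v)
  have hBA : ∀ v, B (A v) = P v := by
    intro v
    have hAPv : A (P v) = A v := by
      have h0 : A (v - P v) = 0 := hsubK v
      rw [map_sub, sub_eq_zero] at h0
      exact h0.symm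
    have h1 : P' (A v) = ⟨A v, hAmemW v⟩ := Subtype.ext (hPW _ (hAmemW v))
    have h2 : e ⟨P v, hPmemW v⟩ = ⟨A v, hAmemW v⟩ := by
      rw [hecoe]
      exact Subtype.ext (by rw [hA'coe]; exact hAPv)
    have h3 : e.symm ⟨A v, hAmemW v⟩ = ⟨P v, hPmemW v⟩ := by
      rw [← h2, e.symm_apply_apply]
    rw [hBdef, h1, h3]
  refine ⟨B, ?_, hBA, hPB, hAB⟩
  intro u w
  have h2 : ⟪u - P u, B w⟫ = 0 :=
    (Submodule.mem_orthogonal K (B w)).mp (hBW w) _ (hsubK u)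
  rw [inner_sub_left, sub_eq_zero] at h2
  calc ⟪u, B w⟫ = ⟪P u, B w⟫ := h2
    _ = ⟪A (B u), B w⟫ := by rw [hAB]
    _ = -⟪B u, A (B w)⟫ := hA _ _
    _ = -⟪B u, P w⟫ := by rw [hAB]
    _ = -⟪P (B u), w⟫ := by rw [hPsa]
    _ = -⟪B u, w⟫ := by rw [hPB]
    _ = -⟪w, B u⟫ := by rw [real_inner_comm]

/-- Pseudoinverse of a 2-form: let `V` be a finite-dimensional real inner product space,
`C : V → V*` a skew-symmetric linear map (a 2-form) and `P : V → V` the orthogonal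
projector (idempotent and self-adjoint) with `ker P = ker C`. Then there is a unique
skew-symmetric linear map `Π : V* → V` (a 2-vector) with `Π ∘ C = P` and `P ∘ Π = Π`. -/
theorem two_form_pseudoinverse {V : Type*} [NormedAddCommGroup V] [InnerProductSpace ℝ V]
    [FiniteDimensional ℝ V]
    (C : V →ₗ[ℝ] (V →ₗ[ℝ] ℝ)) (hC : ∀ v w : V, C v w = - C w v)
    (P : V →ₗ[ℝ] V) (hPidem : P ∘ₗ P = P)
    (hPsa : ∀ v w : V, ⟪P v, w⟫ = ⟪v, P w⟫)
    (hker : LinearMap.ker P = LinearMap.ker C) :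
    ∃! Pi : (V →ₗ[ℝ] ℝ) →ₗ[ℝ] V,
      (∀ α β : V →ₗ[ℝ] ℝ, α (Pi β) = - β (Pi α)) ∧ Pi ∘ₗ C = P ∧ P ∘ₗ Pi = Pi := by
  classical
  -- the duality map `v ↦ ⟪v, ·⟫`
  set φ₀ : V →ₗ[ℝ] (V →ₗ[ℝ] ℝ) :=
    LinearMap.mk₂ ℝ (fun v w => ⟪v, w⟫)
      (fun a b c => inner_add_left a b c)
      (fun r a b => real_inner_smul_left a b r)
      (fun a b c => inner_add_right a b c)
      (fun r a b => real_inner_smul_right a b r) with hφ₀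
  have hφ₀app : ∀ v w : V, φ₀ v w = ⟪v, w⟫ := fun v w => rfl
  have hφinj : Function.Injective φ₀ := by
    rw [← LinearMap.ker_eq_bot, LinearMap.ker_eq_bot']
    intro v hv
    have : φ₀ v v = 0 := by rw [hv]; rfl
    rw [hφ₀app] at this
    exact inner_self_eq_zero.mp this
  have hφsurj : Function.Surjective φ₀ := by
    have hfr : Module.finrank ℝ V = Module.finrank ℝ (V →ₗ[ℝ] ℝ) :=
      (Subspace.dual_finrank_eq (K := ℝ) (V := V)).symm
    exact (LinearMap.injective_iff_surjective_of_finrank_eq_finrank hfr).mp hφinj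
  set φ : V ≃ₗ[ℝ] (V →ₗ[ℝ] ℝ) := LinearEquiv.ofBijective φ₀ ⟨hφinj, hφsurj⟩ with hφ
  have hφapp : ∀ v w : V, φ v w = ⟪v, w⟫ := fun v w => rfl
  have hdual : ∀ (γ : V →ₗ[ℝ] ℝ) (x : V), γ x = ⟪φ.symm γ, x⟫ := by
    intro γ x
    conv_lhs => rw [← φ.apply_symm_apply γ]
    rw [hφapp]
  set A : V →ₗ[ℝ] V := φ.symm.toLinearMap ∘ₗ C with hAdef
  have hAapp : ∀ v, A v = φ.symm (C v) := fun v => rfl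
  have hφA : ∀ v, φ (A v) = C v := by
    intro v; rw [hAapp, φ.apply_symm_apply]
  have hAinner : ∀ v w : V, ⟪A v, w⟫ = C v w := by
    intro v w
    rw [← hφapp, hφA]
  have hA : ∀ v w : V, ⟪A v, w⟫ = -⟪v, A w⟫ := by
    intro v w
    rw [hAinner, hC, real_inner_comm, hAinner]
  have hkerA : LinearMap.ker P = LinearMap.ker A := by
    rw [hker]
    ext v
    simp only [LinearMap.mem_ker, hAapp]
    constructor
    · intro h; rw [h]; exact map_zero _
    · intro h
      have := congrArg φ h
      rw [φ.apply_symm_apply, map_zero] at this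
      exact this
  obtain ⟨B, hBskew, hBA, hPB, hAB⟩ := skew_pinv_aux A hA P hPidem hPsa hkerA
  set Pi : (V →ₗ[ℝ] ℝ) →ₗ[ℝ] V := B ∘ₗ φ.symm.toLinearMap with hPidef
  have hPiapp : ∀ γ, Pi γ = B (φ.symm γ) := fun γ => rfl
  have hskewPi : ∀ α β : V →ₗ[ℝ] ℝ, α (Pi β) = - β (Pi α) := by
    intro α β
    rw [hdual α, hdual β, hPiapp, hPiapp, hBskew]
  have hPiC : Pi ∘ₗ C = P := by
    ext v
    simp only [LinearMap.comp_apply]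
    rw [hPiapp, ← hAapp, hBA]
  have hPPi : P ∘ₗ Pi = Pi := by
    ext γ
    simp only [LinearMap.comp_apply]
    rw [hPiapp, hPB]
  -- key identity: for any map `Q` satisfying the conditions, `C (Q β) = β ∘ P`
  have hCQ : ∀ (Q : (V →ₗ[ℝ] ℝ) →ₗ[ℝ] V),
      (∀ α β : V →ₗ[ℝ] ℝ, α (Q β) = - β (Q α)) → Q ∘ₗ C = P →
      ∀ (β : V →ₗ[ℝ] ℝ) (w : V), C (Q β) w = β (P w) := by
    intro Q hQskew hQC β w
    have h1 : C (Q β) w = - (C w) (Q β) := by rw [hC]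
    have h2 : (C w) (Q β) = - β (Q (C w)) := hQskew (C w) β
    have h3 : Q (C w) = P w := congrArg (fun f : V →ₗ[ℝ] V => f w) hQC
    rw [h1, h2, h3, neg_neg]
  refine ⟨Pi, ⟨hskewPi, hPiC, hPPi⟩, ?_⟩
  rintro Pi' ⟨hskew', hPiC', hPPi'⟩
  ext β
  have e1 : Pi' β = Pi (C (Pi' β)) := by
    have : (Pi ∘ₗ C) (Pi' β) = P (Pi' β) := congrArg (fun f : V →ₗ[ℝ] V => f (Pi' β)) hPiC
    rw [LinearMap.comp_apply] at this
    rw [this]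
    exact (congrArg (fun f : (V →ₗ[ℝ] ℝ) →ₗ[ℝ] V => f β) hPPi').symm
  have e2 : C (Pi' β) = C (Pi β) := by
    ext w
    rw [hCQ Pi' hskew' hPiC' β w, hCQ Pi hskewPi hPiC β w]
  rw [e1, e2, ← LinearMap.comp_apply Pi C, hPiC]
  exact congrArg (fun f : (V →ₗ[ℝ] ℝ) →ₗ[ℝ] V => f β) hPPi
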